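/- arXiv:0909.0339 — 10 statements merged into one kernel-verified Lean document; each statement's English description precedes it below -/
import Mathlib

section
/- Let V be a type and G a simple graph on V that is a tree (connected and acyclic), with at least two vertices. Let A be a finite subset of V and let ℓ : V → Set V be a proper labelling of G relative to A. Then G contains a fully-labelled edge: there exist vertices x and y with G.Adj x y and A ⊆ ℓ(x) ∪ ℓ(y). -/
open SimpleGraph

/-- Lift a walk in `G` avoiding `v` to reachability in the induced graph `G - v`. -/
lemma reach_of_walk {V : Type*} {G : SimpleGraph V} {v : V} :
    ∀ {x a : V} (p : G.Walk x a), v ∉ p.support → ∀ (hx : x ≠ v) (ha : a ≠ v),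
      (G.induce {u : V | u ≠ v}).Reachable ⟨x, hx⟩ ⟨a, ha⟩ := by
  intro x a p
  induction p with
  | nil => intro _ hx ha; exact Reachable.refl _
  | @cons x y a h q ih =>
      intro hsup hx ha
      rw [SimpleGraph.Walk.support_cons] at hsup
      have hq : v ∉ q.support := fun hh => hsup (List.mem_cons_of_mem _ hh)
      have hy : y ≠ v := fun hh => hq (hh ▸ q.start_mem_support)
      have hadj : (G.induce {u : V | u ≠ v}).Adj ⟨x, hx⟩ ⟨y, hy⟩ := h
      exact hadj.reachable.trans (ih hq hy ha)

/-- Project reachability in `G - v` to a walk in `G` avoiding `v`. -/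
lemma walk_of_reach {V : Type*} {G : SimpleGraph V} {v x a : V} {hx : x ≠ v} {ha : a ≠ v}
    (h : (G.induce {u : V | u ≠ v}).Reachable ⟨x, hx⟩ ⟨a, ha⟩) :
    ∃ p : G.Walk x a, v ∉ p.support := by
  obtain ⟨q⟩ := h
  let f : (G.induce {u : V | u ≠ v}) →g G := ⟨Subtype.val, fun h => h⟩
  refine ⟨q.map f, ?_⟩
  rw [SimpleGraph.Walk.support_map]
  intro hv
  obtain ⟨u, _, hu2⟩ := List.mem_map.mp hv
  exact u.2 hu2

/-- In a tree, a vertex `x` cannot be both on `w`'s side of `v` and on `v`'s side of `w`,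
for adjacent `v w`. -/
lemma tree_sides {V : Type*} {G : SimpleGraph V} (hG : G.IsTree) {v w x : V}
    (hvw : G.Adj v w) (p : G.Walk w x) (hp : v ∉ p.support)
    (q : G.Walk v x) (hq : w ∉ q.support) : False := by
  classical
  have hp' : v ∉ (p.toPath : G.Walk w x).support :=
    fun hh => hp (SimpleGraph.Walk.support_toPath_subset p hh)
  have hq' : w ∉ (q.toPath : G.Walk v x).support :=
    fun hh => hq (SimpleGraph.Walk.support_toPath_subset q hh)
  let P1 : G.Path v x := ⟨SimpleGraph.Walk.cons hvw (p.toPath : G.Walk w x),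
    (p.toPath.2).cons hp'⟩
  have heq : P1 = q.toPath := hG.IsAcyclic.path_unique P1 q.toPath
  have hw1 : w ∈ (P1 : G.Walk v x).support := by
    simp only [P1, SimpleGraph.Walk.support_cons]
    exact List.mem_cons_of_mem _ (SimpleGraph.Walk.start_mem_support _)
  rw [heq] at hw1
  exact hq' hw1

/-- If every walk from `x` to `a` passes through `v`, distances add. -/
lemma dist_split {V : Type*} {G : SimpleGraph V} (hc : G.Connected) {v x a : V}
    (hmid : ∀ p : G.Walk x a, v ∈ p.support) :
    G.dist x a = G.dist x v + G.dist v a := by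
  classical
  obtain ⟨p, hp⟩ := hc.exists_walk_length_eq_dist x a
  have hv := hmid p
  have h1 : G.dist x v ≤ (p.takeUntil v hv).length := SimpleGraph.dist_le _
  have h2 : G.dist v a ≤ (p.dropUntil v hv).length := SimpleGraph.dist_le _
  have h3 : (p.takeUntil v hv).length + (p.dropUntil v hv).length = p.length := by
    have := congrArg SimpleGraph.Walk.length (p.take_spec hv)
    rwa [SimpleGraph.Walk.length_append] at this
  have tri := hc.dist_triangle (u := x) (v := v) (w := a)
  omega

/-- **Sperner-type lemma for trees.** If `G` is a tree on a vertex type `V` with at least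
two vertices, `A` is a finite set of labels (vertices), and `ℓ` is a proper labelling of
`G` relative to `A` (every `a ∈ A` has `a ∈ ℓ a`, and for every vertex `v` all labels of
`A` missing from `ℓ v` are distinct from `v` and lie in a single component of `G` minus
`v`), then `G` has a fully-labelled edge. -/
theorem sperner_tree
    {V : Type*} (G : SimpleGraph V) (hG : G.IsTree) (hV : Nontrivial V)
    (A : Set V) (hA : A.Finite) (ℓ : V → Set V)
    (hproper₁ : ∀ a ∈ A, a ∈ ℓ a)
    (hproper₂ : ∀ v : V, ∀ a ∈ A \ ℓ v, ∀ b ∈ A \ ℓ v,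
      ∃ (ha : a ≠ v) (hb : b ≠ v),
        (G.induce {u : V | u ≠ v}).Reachable ⟨a, ha⟩ ⟨b, hb⟩) :
    ∃ x y : V, G.Adj x y ∧ A ⊆ ℓ x ∪ ℓ y := by
  classical
  by_contra hcon
  push_neg at hcon
  have hconn : G.Connected := hG.isConnected
  -- every vertex misses some label
  have hmiss : ∀ v : V, ∃ a, a ∈ A ∧ a ∉ ℓ v := by
    intro v
    by_contra h
    push_neg at h
    obtain ⟨u, hu⟩ := exists_ne v
    obtain ⟨p⟩ := hconn v u
    cases p with
    | nil => exact hu rfl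
    | cons hadj q =>
        exact hcon v _ hadj (fun a ha => Or.inl (h a ha))
  -- every vertex has a successor towards all its missing labels
  have hstep : ∀ v : V, ∃ w, G.Adj v w ∧
      ∀ a, a ∈ A → a ∉ ℓ v → ∃ p : G.Walk w a, v ∉ p.support := by
    intro v
    obtain ⟨a₀, ha₀A, ha₀⟩ := hmiss v
    obtain ⟨ha₀v, -, -⟩ := hproper₂ v a₀ ⟨ha₀A, ha₀⟩ a₀ ⟨ha₀A, ha₀⟩
    obtain ⟨p0⟩ := hconn v a₀
    obtain ⟨p, hpath⟩ := p0.toPath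
    cases p with
    | nil => exact absurd rfl ha₀v.symm
    | @cons _ w _ hadj r =>
        rw [SimpleGraph.Walk.cons_isPath_iff] at hpath
        refine ⟨w, hadj, ?_⟩
        intro a haA haℓ
        obtain ⟨h1, h2, hr⟩ := hproper₂ v a₀ ⟨ha₀A, ha₀⟩ a ⟨haA, haℓ⟩
        obtain ⟨r', hr'⟩ := walk_of_reach hr
        refine ⟨r.append r', ?_⟩
        rw [SimpleGraph.Walk.mem_support_append_iff]
        rintro (h | h)
        · exact hpath.2 h
        · exact hr' h
  choose nxt hadj hwalk using hstep
  obtain ⟨v₀, -, -⟩ := hV.exists_pair_ne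
  set u : ℕ → V := fun n => Nat.rec v₀ (fun _ w => nxt w) n with hu_def
  have hu : ∀ n, u (n + 1) = nxt (u n) := fun n => rfl
  have hadj' : ∀ n, G.Adj (u n) (u (n + 1)) := fun n => (hu n) ▸ hadj (u n)
  -- no label is both missing at `u n` and at `u (n+1)`... rather, get missing label at both
  have hboth : ∀ n, ∃ a, a ∈ A ∧ a ∉ ℓ (u n) ∧ a ∉ ℓ (u (n + 1)) := by
    intro n
    have := hcon (u n) (u (n + 1)) (hadj' n)
    obtain ⟨a, haA, ha⟩ := Set.not_subset.mp this
    exact ⟨a, haA, fun h => ha (Or.inl h), fun h => ha (Or.inr h)⟩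
  -- no backtracking
  have hnb : ∀ n, u (n + 2) ≠ u n := by
    intro n heq
    obtain ⟨a, haA, h1, h2⟩ := hboth n
    obtain ⟨p1, hp1⟩ := hwalk (u n) a haA h1
    obtain ⟨p2, hp2⟩ := hwalk (u (n + 1)) a haA h2
    exact tree_sides hG (hadj' n) p1 hp1 (p2.copy heq rfl)
      (by rw [SimpleGraph.Walk.support_copy]; exact hp2)
  -- "ahead" predicate
  set P : ℕ → V → Prop := fun n a => ∃ p : G.Walk (u (n + 1)) a, u n ∉ p.support with hP_def
  -- missing labels are ahead
  have hmissP : ∀ n a, a ∈ A → a ∉ ℓ (u n) → P n a := by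
    intro n a haA ha
    obtain ⟨p, hp⟩ := hwalk (u n) a haA ha
    exact ⟨p, hp⟩
  -- key: if a is ahead at n+1 then every walk from u n to a passes u (n+1)
  have hkey : ∀ n a, P (n + 1) a → ∀ q : G.Walk (u n) a, u (n + 1) ∈ q.support := by
    intro n a ⟨p, hp⟩ q
    by_contra hq
    -- walk from u (n+2) to u n avoiding u (n+1)
    have hw : ∃ w : G.Walk (u (n + 2)) (u n), u (n + 1) ∉ w.support := by
      refine ⟨p.append q.reverse, ?_⟩
      rw [SimpleGraph.Walk.mem_support_append_iff]
      rintro (h | h)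
      · exact hp h
      · rw [SimpleGraph.Walk.support_reverse] at h
        exact hq (List.mem_reverse.mp h)
    obtain ⟨w, hw⟩ := hw
    -- single edge walk from u (n+1) to u n avoiding u (n+2)
    refine tree_sides hG (hadj' (n + 1)) w hw
      (SimpleGraph.Walk.cons (hadj' n).symm SimpleGraph.Walk.nil) ?_
    simp only [SimpleGraph.Walk.support_cons, SimpleGraph.Walk.support_nil, List.mem_cons,
      List.mem_singleton, List.not_mem_nil, or_false]
    push_neg
    exact ⟨fun h => (hadj' (n + 1)).ne h.symm, fun h => hnb n h⟩
  -- distance relation and monotonicity of "ahead"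
  have hdist : ∀ n a, P (n + 1) a →
      G.dist (u n) a = G.dist (u (n + 1)) a + 1 ∧ P n a := by
    intro n a hPa
    have hmid := hkey n a hPa
    have hd : G.dist (u n) a = G.dist (u n) (u (n + 1)) + G.dist (u (n + 1)) a :=
      dist_split hconn hmid
    have h1 : G.dist (u n) (u (n + 1)) = 1 := SimpleGraph.dist_eq_one_iff_adj.mpr (hadj' n)
    constructor
    · omega
    · -- construct walk from u (n+1) to a avoiding u n
      obtain ⟨p, hp⟩ := hPa
      have hun : u n ∉ p.support := by
        intro hun
        have := hmid ((p.dropUntil (u n) hun))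
        exact hp (SimpleGraph.Walk.support_dropUntil_subset p hun this)
      refine ⟨SimpleGraph.Walk.cons (hadj' (n + 1)) p, ?_⟩
      rw [SimpleGraph.Walk.support_cons]
      intro h
      rcases List.mem_cons.mp h with h | h
      · exact (hadj' n).ne h
      · exact hun h
  -- potential function
  set F : ℕ → ℕ := fun n => ∑ a ∈ hA.toFinset, (if P n a then G.dist (u n) a else 0)
    with hF_def
  have hFdec : ∀ n, F (n + 1) < F n := by
    intro n
    apply Finset.sum_lt_sum
    · intro a _
      by_cases h : P (n + 1) a
      · obtain ⟨hd, hPn⟩ := hdist n a h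
        simp only [if_pos h, if_pos hPn]
        omega
      · simp only [if_neg h]
        exact Nat.zero_le _
    · obtain ⟨a, haA, ha⟩ := hmiss (u (n + 1))
      refine ⟨a, hA.mem_toFinset.mpr haA, ?_⟩
      have hPa : P (n + 1) a := hmissP (n + 1) a haA ha
      obtain ⟨hd, hPn⟩ := hdist n a hPa
      simp only [if_pos hPa, if_pos hPn]
      omega
  have hbound : ∀ n, F n + n ≤ F 0 := by
    intro n
    induction n with
    | zero => omega
    | succ k ih => have := hFdec k; omega
  have := hbound (F 0 + 1)
  omega
end

section
/- Let V be a finite type, G a simple graph on V that is a tree, and f : V → V any function. Then either f fixes some vertex (there is v with f(v) = v), or there exist adjacent vertices x and y such that f(x) and f(y) are not reachable from each other in the graph obtained from G by deleting the edge {x, y}; equivalently, the edge {x, y} lies on the unique path from f(x) to f(y). -/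
open SimpleGraph

lemma tree_step_exists {V : Type*} (G : SimpleGraph V) (hG : G.IsTree)
    {v w : V} (hvw : v ≠ w) :
    ∃ y, G.Adj v y ∧ (G.deleteEdges {s(v, y)}).Reachable y w := by
  classical
  obtain ⟨p, hp, -⟩ := hG.existsUnique_path v w
  cases p with
  | nil => exact absurd rfl hvw
  | cons h q =>
    rename_i y
    refine ⟨y, h, ?_⟩
    have hq : q.IsPath := hp.of_cons
    have hv : v ∉ q.support := by
      have := hp.support_nodup
      simp only [Walk.support_cons, List.nodup_cons] at this
      exact this.1
    refine ⟨q.toDeleteEdges {s(v, y)} ?_⟩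
    intro e he hmem
    simp only [Set.mem_singleton_iff] at hmem
    subst hmem
    exact hv (q.fst_mem_support_of_mem_edges he)

/-- **Discrete fixed point theorem for trees.** If `G` is a tree on a finite vertex type
`V` and `f : V → V` is any function, then either `f` fixes some vertex, or there is an
edge `{x, y}` of `G` such that `f x` and `f y` are not reachable from each other after
deleting the edge `{x, y}`, i.e. the edge `{x, y}` lies on the unique path from `f x`
to `f y`. -/
theorem tree_discrete_fixed_point
    {V : Type*} [Fintype V] (G : SimpleGraph V) (hG : G.IsTree) (f : V → V) :
    (∃ v : V, f v = v) ∨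
      ∃ x y : V, G.Adj x y ∧
        ¬ (G.deleteEdges {s(x, y)}).Reachable (f x) (f y) := by
  classical
  by_contra hcon
  push_neg at hcon
  obtain ⟨h1, h2⟩ := hcon
  choose g hg hreach using fun v => tree_step_exists G hG (Ne.symm (h1 v))
  -- pigeonhole on edges
  have hcard : G.edgeFinset.card < Fintype.card V := by
    have := hG.card_edgeFinset
    omega
  have hmaps : ∀ v ∈ Finset.univ, s(v, g v) ∈ G.edgeFinset := by
    intro v _
    simpa using (hg v)
  obtain ⟨x, -, y, -, hxy, heq⟩ :=
    Finset.exists_ne_map_eq_of_card_lt_of_maps_to (by simpa using hcard) hmaps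
  rw [Sym2.eq_iff] at heq
  have hgx : g x = y ∧ g y = x := by
    rcases heq with ⟨h', -⟩ | ⟨h', h''⟩
    · exact absurd h' hxy
    · exact ⟨h'', h'.symm⟩
    
  obtain ⟨hgx, hgy⟩ := hgx
  have hadj : G.Adj x y := hgx ▸ hg x
  have hr1 : (G.deleteEdges {s(x, y)}).Reachable y (f x) := by
    have := hreach x; rwa [hgx] at this
  have hr2 : (G.deleteEdges {s(x, y)}).Reachable x (f y) := by
    have := hreach y; rw [hgy] at this
    rwa [Sym2.eq_swap] at this
  have hr3 := h2 x y hadj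
  have : (G.deleteEdges {s(x, y)}).Reachable x y :=
    (hr2.trans hr3.symm).trans hr1.symm
  have hbridge : G.IsBridge s(x, y) :=
    isAcyclic_iff_forall_adj_isBridge.1 hG.IsAcyclic hadj
  exact hbridge this
end

section
/- Let V be a type, G a simple graph on V that is a tree, A ⊆ V a set of vertices (possibly infinite), and D a family of subsets of V indexed by the elements of A such that (i) a ∈ D(a) for every a ∈ A, and (ii) for all a, b ∈ A, every vertex lying on any path in G from a to b belongs to D(a) ∪ D(b). Define the membership labelling ℓ : V → Set V by ℓ(v) = {a ∈ A : v ∈ D(a)}. Then ℓ is a proper labelling relative to A: every a ∈ A satisfies a ∈ ℓ(a), and for every vertex v, any two labels a, b ∈ A \ ℓ(v) are both distinct from v and lie in the same component of G minus v. -/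
lemma walk_induce_reachable {V : Type*} (G : SimpleGraph V) (S : Set V) :
    ∀ {a b : V} (p : G.Walk a b) (h : ∀ u ∈ p.support, u ∈ S),
      (G.induce S).Reachable ⟨a, h a p.start_mem_support⟩ ⟨b, h b p.end_mem_support⟩ := by
  intro a b p
  induction p with
  | nil => intro h; rfl
  | cons hadj q ih =>
    intro h
    have hS : ∀ u ∈ q.support, u ∈ S := fun u hu => h u (by simp [hu])
    exact (SimpleGraph.Adj.reachable (by exact hadj : (G.induce S).Adj ⟨_, _⟩ ⟨_, _⟩)).trans
      (ih hS)

/-- **The membership labelling of a KKM cover of a tree is proper.** Let `G` be a tree on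
`V`, let `A ⊆ V`, and let `D` assign to each element of `A` a set of vertices such that
`a ∈ D a` for every `a ∈ A` and, for all `a, b ∈ A`, every vertex on any path in `G`
from `a` to `b` lies in `D a ∪ D b`. Then the membership labelling
`ℓ v = {a ∈ A : v ∈ D a}` is a proper labelling relative to `A`: every `a ∈ A` satisfies
`a ∈ ℓ a`, and for every vertex `v` any two labels `a, b ∈ A \ ℓ v` are distinct from
`v` and lie in the same component of `G` minus `v`. -/
theorem membership_labelling_proper
    {V : Type*} (G : SimpleGraph V) (hG : G.IsTree)
    (A : Set V) (D : V → Set V)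
    (hmem : ∀ a ∈ A, a ∈ D a)
    (hpath : ∀ a ∈ A, ∀ b ∈ A, ∀ p : G.Walk a b, p.IsPath →
      ∀ u ∈ p.support, u ∈ D a ∪ D b)
    (ℓ : V → Set V) (hℓ : ℓ = fun v => {a ∈ A | v ∈ D a}) :
    (∀ a ∈ A, a ∈ ℓ a) ∧
      ∀ v : V, ∀ a ∈ A \ ℓ v, ∀ b ∈ A \ ℓ v,
        ∃ (ha : a ≠ v) (hb : b ≠ v),
          (G.induce {u : V | u ≠ v}).Reachable ⟨a, ha⟩ ⟨b, hb⟩ := by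
  subst hℓ
  refine ⟨fun a ha => ⟨ha, hmem a ha⟩, ?_⟩
  rintro v a ⟨haA, haℓ⟩ b ⟨hbA, hbℓ⟩
  have hva : v ∉ D a := fun h => haℓ ⟨haA, h⟩
  have hvb : v ∉ D b := fun h => hbℓ ⟨hbA, h⟩
  have ha : a ≠ v := fun h => hva (h ▸ hmem a haA)
  have hb : b ≠ v := fun h => hvb (h ▸ hmem b hbA)
  classical
  obtain ⟨w⟩ := hG.isConnected.preconnected a b
  set p := w.toPath
  have hsupp : ∀ u ∈ (p : G.Walk a b).support, u ∈ {u : V | u ≠ v} := by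
    intro u hu h
    subst h
    rcases hpath a haA b hbA p p.2 u hu with h | h
    · exact hva h
    · exact hvb h
  exact ⟨ha, hb, walk_induce_reachable G _ (p : G.Walk a b) hsupp⟩
end

section
/- Let V be a type, G a simple graph on V that is a tree with at least two vertices, A a finite subset of V, and D a family of subsets of V indexed by the elements of A such that (i) a ∈ D(a) for every a ∈ A, and (ii) for all a, b ∈ A, every vertex lying on any path in G from a to b belongs to D(a) ∪ D(b). Then there exist adjacent vertices x and y such that for every a ∈ A, x ∈ D(a) or y ∈ D(a). -/
open SimpleGraph Walk

private lemma takeUntil_cons' {V : Type*} [DecidableEq V] {G : SimpleGraph V} {v w u x : V}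
    (r : G.Adj v x) (p : G.Walk x w) (hu : u ∈ p.support) (hvu : v ≠ u)
    (h2 : u ∈ (Walk.cons r p).support) :
    (Walk.cons r p).takeUntil u h2 = Walk.cons r (p.takeUntil u hu) := by
  simp [Walk.takeUntil, hvu]

private lemma tree_path_eq {V : Type*} {G : SimpleGraph V} (hG : G.IsTree) {u v : V}
    {p q : G.Walk u v} (hp : p.IsPath) (hq : q.IsPath) : p = q :=
  (hG.existsUnique_path u v).unique hp hq

private lemma tree_path_length {V : Type*} {G : SimpleGraph V} (hG : G.IsTree) {u v : V}
    {p : G.Walk u v} (hp : p.IsPath) : p.length = G.dist u v := by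
  classical
  obtain ⟨w, hw⟩ := hG.isConnected.exists_walk_length_eq_dist u v
  refine le_antisymm ?_ (SimpleGraph.dist_le p)
  have hb := tree_path_eq hG hp w.bypass_isPath
  calc p.length = w.bypass.length := by rw [hb]
    _ ≤ w.length := w.length_bypass_le
    _ = _ := hw

/-- The set of edges of paths between members of `A`. -/
private def kkmEdges {V : Type*} (G : SimpleGraph V) (A : Set V) : Set (Sym2 V) :=
  {e | ∃ c ∈ A, ∃ c' ∈ A, ∃ p : G.Walk c c', p.IsPath ∧ e ∈ p.edges}

private lemma kkmEdges_finite {V : Type*} {G : SimpleGraph V} (hG : G.IsTree) {A : Set V}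
    (hA : A.Finite) : (kkmEdges G A).Finite := by
  have hsub : kkmEdges G A ⊆
      ⋃ c ∈ A, ⋃ c' ∈ A, {e | e ∈ ((hG.existsUnique_path c c').choose).edges} := by
    rintro e ⟨c, hc, c', hc', p, hp, he⟩
    refine Set.mem_biUnion hc (Set.mem_biUnion hc' ?_)
    have h2 := (hG.existsUnique_path c c').choose_spec
    have : p = (hG.existsUnique_path c c').choose :=
      tree_path_eq hG hp h2.1
    rw [this] at he
    exact he
  exact Set.Finite.subset
    (Set.Finite.biUnion hA fun c _ => Set.Finite.biUnion hA fun c' _ => List.finite_toSet _) hsub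

private lemma kkm_aux {V : Type*} {G : SimpleGraph V} (hG : G.IsTree) (hV : Nontrivial V) :
    ∀ (n : ℕ) (A : Set V), A.Finite → ∀ D : V → Set V,
      (∀ a ∈ A, a ∈ D a) →
      (∀ a ∈ A, ∀ b ∈ A, ∀ p : G.Walk a b, p.IsPath → ∀ u ∈ p.support, u ∈ D a ∪ D b) →
      (kkmEdges G A).ncard ≤ n →
      ∃ x y : V, G.Adj x y ∧ ∀ a ∈ A, x ∈ D a ∨ y ∈ D a := by
  classical
  intro n
  induction n with
  | zero =>
    intro A hA D hmem hpath hcard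
    -- Here `A` must be a subsingleton; otherwise there is an edge on a path.
    have hss : ∀ c ∈ A, ∀ c' ∈ A, c = c' := by
      intro c hc c' hc'
      by_contra hne
      obtain ⟨p, hp, -⟩ := hG.existsUnique_path c c'
      cases p with
      | nil => exact hne rfl
      | cons h2 p2 =>
        have hmemE : s(c, _) ∈ kkmEdges G A :=
          ⟨c, hc, c', hc', _, hp, by rw [Walk.edges_cons]; exact List.mem_cons_self⟩
        have := (Set.ncard_pos (kkmEdges_finite hG hA)).mpr ⟨_, hmemE⟩
        omega
    -- subsingleton case
    have hadj : ∀ v : V, ∃ z, G.Adj v z := by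
      intro v
      obtain ⟨w, hw⟩ := exists_ne v
      obtain ⟨p⟩ := hG.isConnected.preconnected v w
      cases p with
      | nil => exact absurd rfl hw
      | cons h2 _ => exact ⟨_, h2⟩
    by_cases hne : A.Nonempty
    · obtain ⟨a₀, ha₀⟩ := hne
      obtain ⟨z, hz⟩ := hadj a₀
      refine ⟨a₀, z, hz, fun c hc => Or.inl ?_⟩
      rcases hss a₀ ha₀ c hc with rfl
      exact hmem _ hc
    · obtain ⟨v, w, hvw⟩ := hV.exists_pair_ne
      obtain ⟨z, hz⟩ := hadj v
      exact ⟨v, z, hz, fun c hc => absurd ⟨c, hc⟩ hne⟩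
  | succ n ih =>
    intro A hA D hmem hpath hcard
    by_cases hss : ∀ c ∈ A, ∀ c' ∈ A, c = c'
    · -- subsingleton again (same as zero case)
      have hadj : ∀ v : V, ∃ z, G.Adj v z := by
        intro v
        obtain ⟨w, hw⟩ := exists_ne v
        obtain ⟨p⟩ := hG.isConnected.preconnected v w
        cases p with
        | nil => exact absurd rfl hw
        | cons h2 _ => exact ⟨_, h2⟩
      by_cases hne : A.Nonempty
      · obtain ⟨a₀, ha₀⟩ := hne
        obtain ⟨z, hz⟩ := hadj a₀
        refine ⟨a₀, z, hz, fun c hc => Or.inl ?_⟩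
        rcases hss a₀ ha₀ c hc with rfl
        exact hmem _ hc
      · obtain ⟨v, w, hvw⟩ := hV.exists_pair_ne
        obtain ⟨z, hz⟩ := hadj v
        exact ⟨v, z, hz, fun c hc => absurd ⟨c, hc⟩ hne⟩
    · push_neg at hss
      obtain ⟨c₀, hc₀, c₀', hc₀', hc₀ne⟩ := hss
      -- pick a pair (a, b) in A × A of maximal distance
      have hsne : (hA.toFinset ×ˢ hA.toFinset).Nonempty :=
        ⟨(c₀, c₀'), by simp [hc₀, hc₀']⟩
      obtain ⟨⟨a, b⟩, habs, hmaxF⟩ :=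
        Finset.exists_max_image (hA.toFinset ×ˢ hA.toFinset) (fun pq => G.dist pq.1 pq.2) hsne
      rw [Finset.mem_product] at habs
      have ha : a ∈ A := hA.mem_toFinset.mp habs.1
      have hb : b ∈ A := hA.mem_toFinset.mp habs.2
      have hmax : ∀ c ∈ A, ∀ c' ∈ A, G.dist c c' ≤ G.dist a b := by
        intro c hc c' hc'
        exact hmaxF (c, c') (by rw [Finset.mem_product]; exact ⟨hA.mem_toFinset.mpr hc, hA.mem_toFinset.mpr hc'⟩)
      have hdpos : 0 < G.dist a b :=
        lt_of_lt_of_le (hG.isConnected.pos_dist_of_ne hc₀ne) (hmax _ hc₀ _ hc₀')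
      have hab : a ≠ b := by
        rintro rfl
        simp [SimpleGraph.dist_self] at hdpos
      obtain ⟨p, hp, -⟩ := hG.existsUnique_path a b
      cases p with
      | nil => exact absurd rfl hab
      | @cons _ x _ h p₁ =>
        have hax : a ≠ x := h.ne
        have hp₁ : p₁.IsPath := hp.of_cons
        have hanp₁ : a ∉ p₁.support := ((Walk.cons_isPath_iff h p₁).mp hp).2
        -- Claim L: every path from a to c ∈ A (c ≠ a) passes through x
        have claimL : ∀ c ∈ A, c ≠ a → ∀ q : G.Walk a c, q.IsPath → x ∈ q.support := by
          intro c hc hca q hq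
          cases q with
          | nil => exact absurd rfl hca.symm
          | @cons _ x' _ h' q₁ =>
            by_contra hxs
            have hx'mem : x' ∈ (Walk.cons h' q₁).support := by
              rw [Walk.support_cons]
              exact List.mem_cons_of_mem _ q₁.start_mem_support
            have hxx' : x ≠ x' := fun e => hxs (e ▸ hx'mem)
            have haq₁ : a ∉ q₁.support := ((Walk.cons_isPath_iff h' q₁).mp hq).2
            have hq₁ : q₁.IsPath := hq.of_cons
            -- key: no common vertex of the two paths besides a
            have key : ∀ u, u ∈ (Walk.cons h p₁).support → u ∉ q₁.support := by
              intro u hu huq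
              have hua : a ≠ u := by rintro rfl; exact haq₁ huq
              have hup : u ∈ p₁.support := by
                rw [Walk.support_cons] at hu
                rcases List.mem_cons.mp hu with h5 | h5
                · exact absurd h5.symm hua
                · exact h5
              have huq' : u ∈ (Walk.cons h' q₁).support := by
                rw [Walk.support_cons]; exact List.mem_cons_of_mem _ huq
              have heq := tree_path_eq hG (hp.takeUntil hu) (hq.takeUntil huq')
              rw [takeUntil_cons' h p₁ hup hua hu, takeUntil_cons' h' q₁ huq hua huq'] at heq
              have hs := congrArg Walk.support heq
              rw [Walk.support_cons, Walk.support_cons, Walk.support_eq_cons,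
                Walk.support_eq_cons (q₁.takeUntil u huq)] at hs
              simp only [List.cons.injEq] at hs
              exact hxx' hs.2.1
            -- build the path from b to c through a
            have hwpath : ((Walk.cons h p₁).reverse.append (Walk.cons h' q₁)).IsPath := by
              rw [Walk.isPath_def, Walk.support_append, Walk.support_reverse]
              rw [Walk.support_cons h' q₁, List.tail_cons]
              refine List.Nodup.append ?_ hq₁.support_nodup ?_
              · exact List.nodup_reverse.mpr hp.support_nodup
              · intro u hu1 hu2
                exact key u (List.mem_reverse.mp hu1) hu2
            have hlen : ((Walk.cons h p₁).reverse.append (Walk.cons h' q₁)).length =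
                G.dist a b + (q₁.length + 1) := by
              rw [Walk.length_append, Walk.length_reverse, tree_path_length hG hp,
                Walk.length_cons]
            have hd2 := tree_path_length hG hwpath
            rw [hlen] at hd2
            have := hmax b hb c hc
            omega
        -- the candidate edge {a, x}
        by_cases hgood : ∀ c ∈ A, a ∈ D c ∨ x ∈ D c
        · exact ⟨a, x, h, hgood⟩
        · push_neg at hgood
          obtain ⟨b', hb', hna, hnx⟩ := hgood
          have hb'a : b' ≠ a := by rintro rfl; exact hna (hmem _ hb')
          obtain ⟨q, hq, -⟩ := hG.existsUnique_path a b'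
          have hxq : x ∈ q.support := claimL b' hb' hb'a q hq
          have hxDa : x ∈ D a := (hpath a ha b' hb' q hq x hxq).resolve_right hnx
          -- a does not lie on any path from x to c, for c ∈ A \ {a}
          have ext_fact : ∀ c ∈ A, c ≠ a → ∀ r : G.Walk x c, r.IsPath → a ∉ r.support := by
            intro c hc hca r hr har
            have hr2 : (r.dropUntil a har).IsPath := hr.dropUntil har
            have hxr2 : x ∈ (r.dropUntil a har).support := claimL c hc hca _ hr2
            have hnd : r.support.Nodup := hr.support_nodup
            rw [← r.take_spec har, Walk.support_append] at hnd
            have hdisj := List.disjoint_of_nodup_append hnd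
            have h1 : x ∈ (r.takeUntil a har).support := (r.takeUntil a har).start_mem_support
            have h2 : x ∈ (r.dropUntil a har).support.tail := by
              have hc2 := Walk.support_eq_cons (r.dropUntil a har)
              rw [hc2] at hxr2
              rcases List.mem_cons.mp hxr2 with h3 | h3
              · exact absurd h3 hax.symm
              · exact h3
            exact hdisj h1 h2
          -- a does not lie on any path between members of A \ {a}
          have mid_fact : ∀ c ∈ A, c ≠ a → ∀ c' ∈ A, c' ≠ a → ∀ r : G.Walk c c',
              r.IsPath → a ∉ r.support := by
            intro c hc hca c' hc' hc'a r hr har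
            have h1 : x ∈ (r.dropUntil a har).support := claimL c' hc' hc'a _ (hr.dropUntil har)
            have h2 : x ∈ ((r.takeUntil a har).reverse).support :=
              claimL c hc hca _ (hr.takeUntil har).reverse
            rw [Walk.support_reverse, List.mem_reverse] at h2
            have hnd : r.support.Nodup := hr.support_nodup
            rw [← r.take_spec har, Walk.support_append] at hnd
            have hdisj := List.disjoint_of_nodup_append hnd
            have h3 : x ∈ (r.dropUntil a har).support.tail := by
              have hc2 := Walk.support_eq_cons (r.dropUntil a har)
              rw [hc2] at h1
              rcases List.mem_cons.mp h1 with h3 | h3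
              · exact absurd h3 hax.symm
              · exact h3
            exact hdisj h2 h3
          -- new data
          set Dx0 : Set V := if x ∈ A then D x else Set.univ with hDx0
          set A' : Set V := insert x (A \ {a}) with hA'def
          set D' : V → Set V := fun v => if v = x then D a ∩ Dx0 else D v with hD'def
          have hD'x : D' x = D a ∩ Dx0 := by simp [hD'def]
          have hD'ne : ∀ v, v ≠ x → D' v = D v := by intro v hv; simp [hD'def, hv]
          have hxD'x : x ∈ D' x := by
            rw [hD'x]
            refine ⟨hxDa, ?_⟩
            by_cases hxA : x ∈ A
            · simp [hDx0, hxA]; exact hmem _ hxA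
            · simp [hDx0, hxA]
          have hA'fin : A'.Finite := (hA.diff).insert x
          -- membership hypothesis for A'
          have hmem' : ∀ c ∈ A', c ∈ D' c := by
            intro c hc
            rcases Set.mem_insert_iff.mp hc with rfl | ⟨hcA, hca⟩
            · exact hxD'x
            · rw [Set.mem_singleton_iff] at hca
              by_cases hcx : c = x
              · exact hcx ▸ hxD'x
              · rw [hD'ne c hcx]; exact hmem _ hcA
          -- path condition on the x side
          have hxside : ∀ c ∈ A, c ≠ a → ∀ r : G.Walk x c, r.IsPath →
              ∀ u ∈ r.support, u ∈ (D a ∩ Dx0) ∪ D c := by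
            intro c hc hca r hr u hu
            have hna' := ext_fact c hc hca r hr
            have hcons : (Walk.cons h r).IsPath := (Walk.cons_isPath_iff h r).mpr ⟨hr, hna'⟩
            have h1 : u ∈ D a ∪ D c := hpath a ha c hc _ hcons u
              (by rw [Walk.support_cons]; exact List.mem_cons_of_mem _ hu)
            have h2 : u ∈ Dx0 ∪ D c := by
              by_cases hxA : x ∈ A
              · have := hpath x hxA c hc r hr u hu
                rw [hDx0, if_pos hxA]; exact this
              · left; rw [hDx0, if_neg hxA]; trivial
            rcases h1 with h1 | h1
            · rcases h2 with h2 | h2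
              · exact Or.inl ⟨h1, h2⟩
              · exact Or.inr h2
            · exact Or.inr h1
          -- path hypothesis for A'
          have hpath' : ∀ c ∈ A', ∀ c' ∈ A', ∀ r : G.Walk c c', r.IsPath →
              ∀ u ∈ r.support, u ∈ D' c ∪ D' c' := by
            intro c hc c' hc' r hr u hu
            have hcA : c = x ∨ (c ∈ A ∧ c ≠ a) := by
              rcases Set.mem_insert_iff.mp hc with h4 | h4
              · exact Or.inl h4
              · exact Or.inr ⟨h4.1, h4.2⟩
            have hc'A : c' = x ∨ (c' ∈ A ∧ c' ≠ a) := by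
              rcases Set.mem_insert_iff.mp hc' with h4 | h4
              · exact Or.inl h4
              · exact Or.inr ⟨h4.1, h4.2⟩
            by_cases hcx : x = c
            · subst hcx
              by_cases hc'x : x = c'
              · subst hc'x
                have : r = Walk.nil := Walk.isPath_iff_eq_nil.mp hr
                subst this
                simp only [Walk.support_nil, List.mem_singleton] at hu
                subst hu
                exact Or.inl hxD'x
              · rcases hc'A with h4 | ⟨hc'mem, hc'a⟩
                · exact absurd h4.symm hc'x
                · have := hxside c' hc'mem hc'a r hr u hu
                  rw [hD'x, hD'ne c' (fun e => hc'x e.symm)]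
                  exact this
            · rcases hcA with h4 | ⟨hcmem, hca⟩
              · exact absurd h4.symm hcx
              · by_cases hc'x : x = c'
                · subst hc'x
                  have := hxside c hcmem hca r.reverse hr.reverse u
                    (by rw [Walk.support_reverse, List.mem_reverse]; exact hu)
                  rw [hD'x, hD'ne c (fun e => hcx e.symm)]
                  exact Or.symm this
                · rcases hc'A with h4 | ⟨hc'mem, hc'a⟩
                  · exact absurd h4.symm hc'x
                  · rw [hD'ne c (fun e => hcx e.symm), hD'ne c' (fun e => hc'x e.symm)]
                    exact hpath c hcmem c' hc'mem r hr u hu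
          -- edge subset facts
          have hsub1 : ∀ c ∈ A, c ≠ a → ∀ r : G.Walk x c, r.IsPath →
              ∀ f ∈ r.edges, f ∈ kkmEdges G A ∧ f ≠ s(a, x) := by
            intro c hc hca r hr f hf
            have hna' := ext_fact c hc hca r hr
            have hcons : (Walk.cons h r).IsPath := (Walk.cons_isPath_iff h r).mpr ⟨hr, hna'⟩
            constructor
            · exact ⟨a, ha, c, hc, _, hcons, by rw [Walk.edges_cons]; exact List.mem_cons_of_mem _ hf⟩
            · rintro rfl
              exact hna' (r.fst_mem_support_of_mem_edges hf)
          have hsub2 : ∀ c ∈ A, c ≠ a → ∀ c' ∈ A, c' ≠ a → ∀ r : G.Walk c c', r.IsPath →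
              ∀ f ∈ r.edges, f ∈ kkmEdges G A ∧ f ≠ s(a, x) := by
            intro c hc hca c' hc' hc'a r hr f hf
            constructor
            · exact ⟨c, hc, c', hc', r, hr, hf⟩
            · rintro rfl
              exact mid_fact c hc hca c' hc' hc'a r hr (r.fst_mem_support_of_mem_edges hf)
          have hsubset : kkmEdges G A' ⊆ kkmEdges G A \ {s(a, x)} := by
            rintro f ⟨c, hc, c', hc', r, hr, hf⟩
            have hgoal : f ∈ kkmEdges G A ∧ f ≠ s(a, x) := by
              by_cases hcx : x = c
              · subst hcx
                by_cases hc'x : x = c'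
                · subst hc'x
                  have : r = Walk.nil := Walk.isPath_iff_eq_nil.mp hr
                  subst this
                  simp at hf
                · rcases Set.mem_insert_iff.mp hc' with h4 | h4
                  · exact absurd h4.symm hc'x
                  · exact hsub1 c' h4.1 h4.2 r hr f hf
              · rcases Set.mem_insert_iff.mp hc with h4 | h4
                · exact absurd h4.symm hcx
                · by_cases hc'x : x = c'
                  · subst hc'x
                    exact hsub1 c h4.1 h4.2 r.reverse hr.reverse f
                      (by rw [Walk.edges_reverse, List.mem_reverse]; exact hf)
                  · rcases Set.mem_insert_iff.mp hc' with h5 | h5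
                    · exact absurd h5.symm hc'x
                    · exact hsub2 c h4.1 h4.2 c' h5.1 h5.2 r hr f hf
            exact ⟨hgoal.1, by simpa using hgoal.2⟩
          -- the edge s(a,x) lies in kkmEdges G A
          have hmemE : s(a, x) ∈ kkmEdges G A := by
            refine ⟨a, ha, b', hb', q, hq, ?_⟩
            have ht : q.takeUntil x hxq = Walk.cons h Walk.nil := by
              refine tree_path_eq hG (hq.takeUntil hxq) ?_
              rw [Walk.cons_isPath_iff]
              exact ⟨Walk.IsPath.nil, by simp [hax]⟩
            have : s(a, x) ∈ (q.takeUntil x hxq).edges := by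
              rw [ht]; simp
            exact q.edges_takeUntil_subset hxq this
          -- cardinality decreases
          have hfinA := kkmEdges_finite hG hA
          have hcard' : (kkmEdges G A').ncard ≤ n := by
            have h1 : (kkmEdges G A').ncard ≤ (kkmEdges G A \ {s(a, x)}).ncard :=
              Set.ncard_le_ncard hsubset (hfinA.diff)
            have h2 : (kkmEdges G A \ {s(a, x)}).ncard < (kkmEdges G A).ncard :=
              Set.ncard_diff_singleton_lt_of_mem hmemE hfinA
            omega
          obtain ⟨u, v, huv, hAll⟩ := ih A' hA'fin D' hmem' hpath' hcard'
          refine ⟨u, v, huv, fun c hc => ?_⟩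
          by_cases hca : c = a
          · have := hAll x (Set.mem_insert x _)
            rw [hD'x] at this
            rw [hca]
            rcases this with h4 | h4
            · exact Or.inl h4.1
            · exact Or.inr h4.1
          · have hcA' : c ∈ A' := Set.mem_insert_of_mem x ⟨hc, hca⟩
            have := hAll c hcA'
            by_cases hcx : x = c
            · subst hcx
              rw [hD'x] at this
              rcases this with h4 | h4
              · exact Or.inl (by have h5 := h4.2; rwa [hDx0, if_pos hc] at h5)
              · exact Or.inr (by have h5 := h4.2; rwa [hDx0, if_pos hc] at h5)
            · rw [hD'ne c (fun e => hcx e.symm)] at this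
              exact this

/-- **Combinatorial Tree KKM theorem.** Let `G` be a tree on `V` with at least two
vertices, `A` a finite subset of `V`, and `D` a family of subsets of `V` indexed by the
elements of `A` such that `a ∈ D a` for every `a ∈ A`, and for all `a, b ∈ A` every
vertex lying on any path in `G` from `a` to `b` belongs to `D a ∪ D b`. Then there are
adjacent vertices `x` and `y` such that for every `a ∈ A`, `x ∈ D a` or `y ∈ D a`. -/
theorem tree_kkm_combinatorial
    {V : Type*} (G : SimpleGraph V) (hG : G.IsTree) (hV : Nontrivial V)
    (A : Set V) (hA : A.Finite) (D : V → Set V)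
    (hmem : ∀ a ∈ A, a ∈ D a)
    (hpath : ∀ a ∈ A, ∀ b ∈ A, ∀ p : G.Walk a b, p.IsPath →
      ∀ u ∈ p.support, u ∈ D a ∪ D b) :
    ∃ x y : V, G.Adj x y ∧ ∀ a ∈ A, x ∈ D a ∨ y ∈ D a := by
  exact kkm_aux hG hV (kkmEdges G A).ncard A hA D hmem hpath le_rfl
end

section
/- Let A be a nonempty finite set of real numbers and for each a ∈ A let D(a) ⊆ ℝ be a closed set with a ∈ D(a). Suppose that for all a, b ∈ A, the closed interval between a and b (Set.uIcc a b) is contained in D(a) ∪ D(b). Then the intersection ⋂_{a ∈ A} D(a) is nonempty. -/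
/-- **KKM theorem on the real line (finite covers).** If `A` is a nonempty finite set of
reals and, for each `a ∈ A`, `D a` is a closed set containing `a` such that the segment
between any two points `a, b ∈ A` is covered by `D a ∪ D b`, then all the sets `D a`,
`a ∈ A`, have a common point. -/
theorem kkm_real_line_finite
    (A : Finset ℝ) (hA : A.Nonempty) (D : ℝ → Set ℝ)
    (hclosed : ∀ a ∈ A, IsClosed (D a))
    (hmem : ∀ a ∈ A, a ∈ D a)
    (hpath : ∀ a ∈ A, ∀ b ∈ A, Set.uIcc a b ⊆ D a ∪ D b) :
    (⋂ a ∈ A, D a).Nonempty := by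
  classical
  obtain ⟨m, hmA, hmmin⟩ := A.exists_min_image id hA
  obtain ⟨M, hMA, hMmax⟩ := A.exists_max_image id hA
  simp only [id] at hmmin hMmax
  set T : Set ℝ := {t | t ≤ M ∧ ∀ a ∈ A, a ≤ t → t ∈ D a} with hT
  have hmT : m ∈ T := by
    refine ⟨hmmin M hMA, fun a ha hax => ?_⟩
    have : a = m := le_antisymm hax (hmmin a ha)
    subst this
    exact hmem a ha
  have hTne : T.Nonempty := ⟨m, hmT⟩
  have hbdd : BddAbove T := ⟨M, fun t ht => ht.1⟩
  set x := sSup T with hx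
  have hxM : x ≤ M := csSup_le hTne (fun t ht => ht.1)
  have hmx : m ≤ x := le_csSup hbdd hmT
  have claim1 : ∀ a ∈ A, a ≤ x → x ∈ D a := by
    intro a ha hax
    rcases eq_or_lt_of_le hax with h | h
    · exact h ▸ hmem a ha
    · have hcl : x ∈ closure (D a) := by
        rw [Metric.mem_closure_iff]
        intro ε hε
        have hlt : x - min ε (x - a) < x := by
          have : 0 < min ε (x - a) := lt_min hε (by linarith)
          linarith
        obtain ⟨t, htT, htl⟩ := exists_lt_of_lt_csSup hTne hlt
        have hat : a ≤ t := by
          have : x - min ε (x - a) ≥ x - (x - a) := by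
            have := min_le_right ε (x - a); linarith
          linarith
        have htx : t ≤ x := le_csSup hbdd htT
        refine ⟨t, htT.2 a ha hat, ?_⟩
        have : x - t < ε := by
          have := min_le_left ε (x - a); linarith
        rw [Real.dist_eq, abs_lt]
        constructor <;> linarith
      rwa [(hclosed a ha).closure_eq] at hcl
  have claim2 : ∀ b ∈ A, x < b → x ∈ D b := by
    intro b hb hxb
    by_contra hxD
    have hBne : (A.filter (fun a => x < a)).Nonempty :=
      ⟨b, Finset.mem_filter.2 ⟨hb, hxb⟩⟩
    obtain ⟨c, hcB, hcmin⟩ := (A.filter (fun a => x < a)).exists_min_image id hBne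
    simp only [id] at hcmin
    have hcA : c ∈ A := (Finset.mem_filter.1 hcB).1
    have hxc : x < c := (Finset.mem_filter.1 hcB).2
    have hnhds : (D b)ᶜ ∈ nhds x := (hclosed b hb).isOpen_compl.mem_nhds hxD
    obtain ⟨ε, hε, hball⟩ := Metric.mem_nhds_iff.1 hnhds
    set t := x + min (ε / 2) ((c - x) / 2) with ht
    have hpos : 0 < min (ε / 2) ((c - x) / 2) := lt_min (by linarith) (by linarith)
    have hxt : x < t := by simp only [ht]; linarith
    have htc : t < c := by
      have := min_le_right (ε / 2) ((c - x) / 2)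
      simp only [ht]; linarith
    have htb : t ∉ D b := by
      have hmem_ball : t ∈ Metric.ball x ε := by
        rw [Metric.mem_ball, Real.dist_eq, abs_lt]
        have := min_le_left (ε / 2) ((c - x) / 2)
        constructor <;> simp only [ht] <;> linarith
      exact hball hmem_ball
    have hcb : c ≤ b := hcmin b (Finset.mem_filter.2 ⟨hb, hxb⟩)
    have htT : t ∈ T := by
      refine ⟨le_trans htc.le (hMmax c hcA), fun a ha hat => ?_⟩
      have hax : a ≤ x := by
        by_contra h
        push_neg at h
        have := hcmin a (Finset.mem_filter.2 ⟨ha, h⟩)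
        linarith
      have htu : t ∈ Set.uIcc a b := by
        rw [Set.mem_uIcc]
        left
        exact ⟨hat, le_trans htc.le hcb⟩
      rcases hpath a ha b hb htu with h | h
      · exact h
      · exact absurd h htb
    have := le_csSup hbdd htT
    linarith
  refine ⟨x, Set.mem_iInter₂.2 fun a ha => ?_⟩
  rcases le_or_gt a x with h | h
  · exact claim1 a ha h
  · exact claim2 a ha h
end

section
/- Let A be a set of real numbers (possibly infinite) and for each a ∈ A let D(a) ⊆ ℝ be a closed set with a ∈ D(a). Suppose that for all a, b ∈ A, the closed interval between a and b (Set.uIcc a b) is contained in D(a) ∪ D(b), and that D(a₀) is compact for at least one a₀ ∈ A. Then the intersection ⋂_{a ∈ A} D(a) is nonempty. -/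
/-- KKM theorem on the real line, finite case. -/
lemma kkm_real_line_finset
    (S : Finset ℝ) (hne : S.Nonempty) (D : ℝ → Set ℝ)
    (hclosed : ∀ a ∈ S, IsClosed (D a))
    (hmem : ∀ a ∈ S, a ∈ D a)
    (hpath : ∀ a ∈ S, ∀ b ∈ S, Set.uIcc a b ⊆ D a ∪ D b) :
    ∃ p, ∀ a ∈ S, p ∈ D a := by
  set m := S.min' hne with hm
  set M := S.max' hne with hM
  set B : Set ℝ := {x | x ∈ Set.Icc m M ∧ ∀ a ∈ S, a ≤ x → x ∈ D a} with hB
  have hmM : m ≤ M := S.min'_le _ (S.max'_mem hne)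
  have hmB : m ∈ B := by
    refine ⟨⟨le_refl _, hmM⟩, ?_⟩
    intro a ha hle
    obtain rfl : a = m := le_antisymm hle (S.min'_le a ha)
    exact hmem _ ha
  have hBne : B.Nonempty := ⟨m, hmB⟩
  have hBbdd : BddAbove B := ⟨M, fun x hx => hx.1.2⟩
  set p := sSup B with hp
  have hmp : m ≤ p := le_csSup hBbdd hmB
  have hpM : p ≤ M := csSup_le hBne (fun x hx => hx.1.2)
  refine ⟨p, ?_⟩
  intro a ha
  rcases lt_trichotomy a p with hlt | heq | hgt
  · -- a < p : p is a limit of points of B above a, all in D a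
    set B' := B ∩ Set.Ioi a with hB'
    obtain ⟨x, hxB, hax⟩ := exists_lt_of_lt_csSup hBne hlt
    have hB'ne : B'.Nonempty := ⟨x, hxB, hax⟩
    have hB'bdd : BddAbove B' := hBbdd.mono Set.inter_subset_left
    have hsub : B' ⊆ D a := fun y hy => hy.1.2 a ha (le_of_lt hy.2)
    have hsup : sSup B' = p := by
      apply le_antisymm
      · exact csSup_le_csSup hBbdd hB'ne Set.inter_subset_left
      · apply csSup_le hBne
        intro y hy
        rcases le_or_gt y a with h | h
        · exact le_trans (le_of_lt (lt_of_le_of_lt h hax)) (le_csSup hB'bdd ⟨hxB, hax⟩)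
        · exact le_csSup hB'bdd ⟨hy, h⟩
    have : sSup B' ∈ closure B' := csSup_mem_closure hB'ne hB'bdd
    rw [hsup] at this
    exact (hclosed a ha).closure_subset (closure_mono hsub this)
  · rw [← heq]; exact hmem a ha
  · -- p < a : contradiction via sup
    by_contra hpa
    obtain ⟨ε, hε, hball⟩ := Metric.isOpen_iff.1 (hclosed a ha).isOpen_compl p hpa
    obtain ⟨δ, hδpos, hδε, hδa⟩ : ∃ δ : ℝ, 0 < δ ∧ δ ≤ ε ∧ δ ≤ a - p :=
      ⟨min ε (a - p), lt_min hε (by linarith), min_le_left _ _, min_le_right _ _⟩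
    set x := p + δ / 2 with hx
    have hpx : p < x := by rw [hx]; linarith
    have hxa : x < a := by rw [hx]; linarith
    have hxnD : x ∉ D a := by
      apply hball
      simp only [Metric.mem_ball, Real.dist_eq, abs_sub_lt_iff, hx]
      constructor <;> linarith
    have hxB : x ∈ B := by
      refine ⟨⟨le_trans hmp (le_of_lt hpx), le_trans (le_of_lt hxa) (S.le_max' a ha)⟩, ?_⟩
      intro a' ha' hle
      have hx_uIcc : x ∈ Set.uIcc a' a := by
        rw [Set.uIcc_of_le (le_trans hle (le_of_lt hxa))]
        exact ⟨hle, le_of_lt hxa⟩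
      rcases hpath a' ha' a ha hx_uIcc with h | h
      · exact h
      · exact absurd h hxnD
    exact absurd (le_csSup hBbdd hxB) (not_le.2 hpx)

/-- **KKM theorem on the real line (possibly infinite covers).** If `A` is a set of
reals and, for each `a ∈ A`, `D a` is a closed set containing `a` such that the segment
between any two points `a, b ∈ A` is covered by `D a ∪ D b`, and at least one of the
sets `D a₀`, `a₀ ∈ A`, is compact, then all the sets `D a`, `a ∈ A`, have a common
point. -/
theorem kkm_real_line_infinite
    (A : Set ℝ) (D : ℝ → Set ℝ)
    (hclosed : ∀ a ∈ A, IsClosed (D a))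
    (hmem : ∀ a ∈ A, a ∈ D a)
    (hpath : ∀ a ∈ A, ∀ b ∈ A, Set.uIcc a b ⊆ D a ∪ D b)
    (hcompact : ∃ a₀ ∈ A, IsCompact (D a₀)) :
    (⋂ a ∈ A, D a).Nonempty := by
  obtain ⟨a₀, ha₀, hK⟩ := hcompact
  by_contra h
  rw [Set.not_nonempty_iff_eq_empty] at h
  have hempty : D a₀ ∩ ⋂ (i : A), D i = ∅ := by
    apply Set.eq_empty_of_subset_empty
    rw [← h, Set.biInter_eq_iInter]
    exact Set.inter_subset_right
  obtain ⟨t, ht⟩ := hK.elim_finite_subfamily_closed (fun i : A => D i)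
    (fun i => hclosed i i.2) hempty
  -- finite subfamily S
  set S : Finset ℝ := insert a₀ (t.image (fun i : A => (i : ℝ))) with hS
  have hSA : ∀ a ∈ S, a ∈ A := by
    intro a haS
    rw [hS, Finset.mem_insert] at haS
    rcases haS with rfl | haS
    · exact ha₀
    · obtain ⟨i, _, rfl⟩ := Finset.mem_image.1 haS
      exact i.2
  obtain ⟨p, hpmem⟩ := kkm_real_line_finset S ⟨a₀, Finset.mem_insert_self _ _⟩ D
    (fun a haS => hclosed a (hSA a haS))
    (fun a haS => hmem a (hSA a haS))
    (fun a haS b hbS => hpath a (hSA a haS) b (hSA b hbS))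
  apply Set.notMem_empty p
  rw [← ht]
  refine ⟨hpmem a₀ (Finset.mem_insert_self _ _), ?_⟩
  simp only [Set.mem_iInter]
  intro i hi
  exact hpmem i (Finset.mem_insert_of_mem (Finset.mem_image_of_mem _ hi))
end

section
/- Let S¹ denote the circle ℝ/ℤ (AddCircle (1 : ℝ)) with its quotient topology. Let n ≥ 1, let v : Fin n → S¹ be an injective family of points, and let D : Fin n → Set S¹ be a family of closed sets with v(i) ∈ D(i) for each i. Suppose that for every pair i, j there is a connected subset C of S¹ with v(i) ∈ C, v(j) ∈ C, and C ⊆ D(i) ∪ D(j). Then there exists a point x ∈ S¹ that belongs to at least ⌊n/2⌋ + 1 of the sets, i.e., n/2 + 1 ≤ |{i : x ∈ D(i)}| where n/2 is natural-number (floor) division and the cardinality is taken as a Finset card over Fin n. -/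
open Classical

private lemma real_kkm {ι : Type*} [DecidableEq ι] (T : Finset ι) (hT : T.Nonempty) (t : ι → ℝ) (P : ι → Set ℝ)
    (hP : ∀ i ∈ T, IsClosed (P i)) (hmemP : ∀ i ∈ T, t i ∈ P i)
    (hpair : ∀ i ∈ T, ∀ j ∈ T, Set.Icc (t i) (t j) ⊆ P i ∪ P j) :
    ∃ x : ℝ, ∀ i ∈ T, x ∈ P i := by
  set m₁ : ℝ := T.inf' hT t with hm₁
  set M : ℝ := T.sup' hT t with hM
  set A : Set ℝ := Set.Icc m₁ M ∩ ⋂ i ∈ T, (Set.Iio (t i) ∪ P i) with hA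
  have hAclosed : IsClosed A := by
    refine IsClosed.inter isClosed_Icc (isClosed_biInter fun i hi => ?_)
    have h1 : Set.Iio (t i) ∪ P i = Set.Iic (t i) ∪ P i := by
      refine Set.Subset.antisymm ?_ ?_
      · rintro x (hx | hx)
        · exact Or.inl (Set.mem_Iic.2 (le_of_lt (Set.mem_Iio.1 hx)))
        · exact Or.inr hx
      rintro x (hx | hx)
      · rcases lt_or_eq_of_le (Set.mem_Iic.1 hx) with h | h
        · exact Or.inl (Set.mem_Iio.2 h)
        · exact Or.inr (by rw [h]; exact hmemP i hi)
      · exact Or.inr hx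
    rw [h1]
    exact isClosed_Iic.union (hP i hi)
  have hAne : A.Nonempty := by
    refine ⟨m₁, ⟨le_refl _, ?_⟩, ?_⟩
    · obtain ⟨i₀, hi₀⟩ := hT
      exact le_trans (Finset.inf'_le t hi₀) (Finset.le_sup' t hi₀)
    · simp only [Set.mem_iInter, Set.mem_union, Set.mem_Iio]
      intro i hi
      rcases lt_or_eq_of_le (Finset.inf'_le t hi) with h | h
      · exact Or.inl h
      · exact Or.inr (by rw [hm₁, h]; exact hmemP i hi)
  have hAbdd : BddAbove A := ⟨M, fun x hx => hx.1.2⟩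
  set c : ℝ := sSup A with hc
  have hcA : c ∈ A := hAclosed.csSup_mem hAne hAbdd
  refine ⟨c, fun j hj => ?_⟩
  by_cases hle : t j ≤ c
  · have := hcA.2
    simp only [Set.mem_iInter, Set.mem_union, Set.mem_Iio] at this
    rcases this j hj with h | h
    · exact absurd hle (not_le.2 h)
    · exact h
  · push_neg at hle
    set T' : Finset ι := T.filter (fun i => c < t i) with hT'
    have hjT' : j ∈ T' := Finset.mem_filter.2 ⟨hj, hle⟩
    have hT'ne : T'.Nonempty := ⟨j, hjT'⟩
    set t' : ℝ := T'.inf' hT'ne t with ht'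
    have hct' : c < t' := by
      rw [Finset.lt_inf'_iff]
      intro i hi
      exact (Finset.mem_filter.1 hi).2
    have ht'j : t' ≤ t j := Finset.inf'_le t hjT'
    have hsub : Set.Ioo c t' ⊆ P j := by
      intro y hy
      have hyA : y ∉ A := fun h => absurd (le_csSup hAbdd h) (not_le.2 hy.1)
      have hyIcc : y ∈ Set.Icc m₁ M := by
        constructor
        · exact le_trans hcA.1.1 hy.1.le
        · exact le_trans hy.2.le (le_trans ht'j (Finset.le_sup' t hj))
      have : ∃ i ∈ T, t i ≤ y ∧ y ∉ P i := by
        by_contra hcon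
        push_neg at hcon
        refine hyA ⟨hyIcc, ?_⟩
        simp only [Set.mem_iInter, Set.mem_union, Set.mem_Iio]
        intro i hi
        by_cases h : t i ≤ y
        · exact Or.inr (hcon i hi h)
        · exact Or.inl (not_le.1 h)
      obtain ⟨i, hiT, hiy, hiP⟩ := this
      have hic : t i ≤ c := by
        by_contra h
        push_neg at h
        have : i ∈ T' := Finset.mem_filter.2 ⟨hiT, h⟩
        exact absurd (lt_of_le_of_lt hiy hy.2) (not_lt.2 (Finset.inf'_le t this))
      have hmem : y ∈ Set.Icc (t i) (t j) := ⟨hiy, le_trans hy.2.le ht'j⟩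
      rcases hpair i hiT j hj hmem with h | h
      · exact absurd h hiP
      · exact h
    have : c ∈ closure (Set.Ioo c t') := by
      rw [closure_Ioo (ne_of_lt hct')]
      exact ⟨le_refl _, hct'.le⟩
    have h2 : closure (Set.Ioo c t') ⊆ P j := (closure_mono hsub).trans (hP j hj).closure_eq.subset
    exact h2 this


/-- **KKM theorem for cycles.** Let `v : Fin n → S¹` (with `n ≥ 1`) be injective points
of the circle `S¹ = ℝ/ℤ` and let `D : Fin n → Set S¹` be closed sets with `v i ∈ D i`,
such that for every pair `i, j` some connected subset of `S¹` containing `v i` and `v j`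
is covered by `D i ∪ D j` (i.e. at least one arc between `v i` and `v j` is covered).
Then some point of `S¹` lies in at least `⌊n / 2⌋ + 1` of the sets `D i`. -/
theorem kkm_cycle
    (n : ℕ) (hn : 1 ≤ n)
    (v : Fin n → AddCircle (1 : ℝ)) (hv : Function.Injective v)
    (D : Fin n → Set (AddCircle (1 : ℝ)))
    (hclosed : ∀ i, IsClosed (D i))
    (hmem : ∀ i, v i ∈ D i)
    (hpath : ∀ i j, ∃ C : Set (AddCircle (1 : ℝ)),
      IsConnected C ∧ v i ∈ C ∧ v j ∈ C ∧ C ⊆ D i ∪ D j) :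
    ∃ x : AddCircle (1 : ℝ),
      n / 2 + 1 ≤ (Finset.univ.filter (fun i : Fin n => x ∈ D i)).card := by
  classical
  haveI : Fact ((0:ℝ) < 1) := ⟨one_pos⟩
  by_contra hcon
  push_neg at hcon
  have hcard : ∀ x : AddCircle (1:ℝ),
      (Finset.univ.filter (fun i : Fin n => x ∈ D i)).card ≤ n / 2 :=
    fun x => Nat.lt_succ_iff.mp (hcon x)
  -- Step A: every point has depth at least n - n/2
  have key : ∀ x : AddCircle (1:ℝ),
      n - n / 2 ≤ (Finset.univ.filter (fun i : Fin n => x ∈ D i)).card := by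
    intro x
    obtain ⟨a, rfl⟩ := QuotientAddGroup.mk_surjective x
    set S := Finset.univ.filter (fun i : Fin n => (a : AddCircle (1:ℝ)) ∈ D i) with hS
    set T := Finset.univ.filter (fun i : Fin n => (a : AddCircle (1:ℝ)) ∉ D i) with hT
    have hST : S.card + T.card = n := by
      rw [hS, hT, Finset.card_filter_add_card_filter_not]
      simp
    have hSn2 : S.card ≤ n / 2 := hcard _
    have hTne : T.Nonempty := by
      rw [← Finset.card_pos]
      omega
    set f : AddCircle (1:ℝ) → ℝ := fun z => ((AddCircle.equivIco 1 a z : Set.Ico a (a+1)) : ℝ)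
      with hf
    have hfz : ∀ z : AddCircle (1:ℝ), ((f z : ℝ) : AddCircle (1:ℝ)) = z :=
      fun z => (AddCircle.equivIco 1 a).symm_apply_apply z
    set P : Fin n → Set ℝ := fun i => (fun r : ℝ => (r : AddCircle (1:ℝ))) ⁻¹' (D i) with hP
    have hPclosed : ∀ i ∈ T, IsClosed (P i) :=
      fun i _ => (hclosed i).preimage continuous_quotient_mk'
    have hPmem : ∀ i ∈ T, f (v i) ∈ P i := by
      intro i _
      show ((f (v i) : ℝ) : AddCircle (1:ℝ)) ∈ D i
      rw [hfz]
      exact hmem i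
    have hPpair : ∀ i ∈ T, ∀ j ∈ T, Set.Icc (f (v i)) (f (v j)) ⊆ P i ∪ P j := by
      intro i hi j hj
      obtain ⟨C, hC, hvi, hvj, hCij⟩ := hpath i j
      have hxi : (a : AddCircle (1:ℝ)) ∉ D i := (Finset.mem_filter.1 hi).2
      have hxj : (a : AddCircle (1:ℝ)) ∉ D j := (Finset.mem_filter.1 hj).2
      have hCne : ∀ c ∈ C, c ≠ ((a : ℝ) : AddCircle (1:ℝ)) := by
        intro c hc h
        rcases hCij hc with h' | h'
        · exact hxi (h ▸ h')
        · exact hxj (h ▸ h')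
      have hcont : ContinuousOn f C := by
        intro c hc
        exact (continuous_subtype_val.continuousAt.comp
          (AddCircle.continuousAt_equivIco 1 a (hCne c hc))).continuousWithinAt
      have himg : IsPreconnected (f '' C) := hC.isPreconnected.image f hcont
      have hsub : f '' C ⊆ P i ∪ P j := by
        rintro _ ⟨c, hc, rfl⟩
        show ((f c : ℝ) : AddCircle (1:ℝ)) ∈ D i ∪ D j
        rw [hfz]
        exact hCij hc
      exact (himg.Icc_subset (Set.mem_image_of_mem f hvi)
        (Set.mem_image_of_mem f hvj)).trans hsub
    obtain ⟨y, hy⟩ := real_kkm T hTne (fun i => f (v i)) P hPclosed hPmem hPpair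
    have hTsub : T ⊆ Finset.univ.filter (fun i : Fin n => ((y:ℝ) : AddCircle (1:ℝ)) ∈ D i) := by
      intro i hi
      exact Finset.mem_filter.2 ⟨Finset.mem_univ _, hy i hi⟩
    have := Finset.card_le_card hTsub
    have := hcard ((y:ℝ) : AddCircle (1:ℝ))
    omega
  -- n must be even
  have heven : n % 2 = 0 := by
    have h1 := key 0
    have h2 := hcard 0
    omega
  have hexact : ∀ x : AddCircle (1:ℝ),
      (Finset.univ.filter (fun i : Fin n => x ∈ D i)).card = n / 2 := by
    intro x
    have h1 := key x
    have h2 := hcard x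
    omega
  by_cases hall : ∀ i, D i = Set.univ
  · have h0 := hexact 0
    have : (Finset.univ.filter (fun i : Fin n => (0 : AddCircle (1:ℝ)) ∈ D i)) =
        Finset.univ := by
      apply Finset.filter_true_of_mem
      intro i _
      rw [hall i]
      trivial
    rw [this, Finset.card_univ, Fintype.card_fin] at h0
    omega
  · push_neg at hall
    obtain ⟨i, hDi⟩ := hall
    -- D i is closed, nonempty, not the whole space; find a boundary point
    have hbd : ∃ x, x ∈ D i ∩ closure (D i)ᶜ := by
      by_contra hemp
      push_neg at hemp
      have hsub1 : D i ⊆ (closure (D i)ᶜ)ᶜ := by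
        intro z hz
        exact fun hz' => hemp z ⟨hz, hz'⟩
      have hsub2 : (closure (D i)ᶜ)ᶜ ⊆ D i := by
        intro z hz
        by_contra hz'
        exact hz (subset_closure hz')
      have hopen : IsOpen (D i) := by
        rw [Set.Subset.antisymm hsub1 hsub2]
        exact isClosed_closure.isOpen_compl
      exact hDi (IsClopen.eq_univ ⟨hclosed i, hopen⟩ ⟨v i, hmem i⟩)
    obtain ⟨x, hxD, hxcl⟩ := hbd
    set F : AddCircle (1:ℝ) → Finset (Fin n) :=
      fun y => Finset.univ.filter (fun i : Fin n => y ∈ D i) with hF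
    set B : Finset (Finset (Fin n)) :=
      Finset.univ.filter (fun s : Finset (Fin n) => i ∉ s) with hB
    have hcover : (D i)ᶜ ⊆ ⋃ s ∈ B, {y | F y = s} := by
      intro y hy
      refine Set.mem_biUnion ?_ rfl
      rw [hB]
      refine Finset.mem_filter.2 ⟨Finset.mem_univ _, ?_⟩
      rw [hF]
      simp only [Finset.mem_filter]
      exact fun h => hy h.2
    have hxcl2 : x ∈ ⋃ s ∈ B, closure {y | F y = s} := by
      have := closure_mono hcover hxcl
      rwa [Finset.closure_biUnion] at this
    obtain ⟨s, hsB, hxs⟩ := by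
      simpa only [Set.mem_iUnion, exists_prop] using hxcl2
    have his : i ∉ s := by
      rw [hB] at hsB
      exact (Finset.mem_filter.1 hsB).2
    have hGne : {y | F y = s}.Nonempty := by
      by_contra h
      rw [Set.not_nonempty_iff_eq_empty] at h
      rw [h, closure_empty] at hxs
      exact hxs
    obtain ⟨y, hys⟩ := hGne
    have hscard : s.card = n / 2 := by
      rw [← hys]
      exact hexact y
    have hssub : s ⊆ F x := by
      intro j hj
      have hGsub : {y | F y = s} ⊆ D j := by
        intro z hz
        have : j ∈ F z := hz ▸ hj
        rw [hF] at this
        exact (Finset.mem_filter.1 this).2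
      have : closure {y | F y = s} ⊆ D j := (hclosed j).closure_subset_iff.2 hGsub
      rw [hF]
      exact Finset.mem_filter.2 ⟨Finset.mem_univ _, this hxs⟩
    have hix : i ∈ F x := by
      rw [hF]
      exact Finset.mem_filter.2 ⟨Finset.mem_univ _, hxD⟩
    have hins : insert i s ⊆ F x := Finset.insert_subset hix hssub
    have hcard2 : s.card + 1 ≤ (F x).card := by
      have := Finset.card_le_card hins
      rwa [Finset.card_insert_of_notMem his] at this
    have hFx : (F x).card = n / 2 := hexact x
    omega
end

section
/- Let S¹ denote the circle ℝ/ℤ (AddCircle (1 : ℝ)) with its quotient topology, modeling a circular political spectrum. Consider a society of n ≥ 1 voters where voter i has position v(i) ∈ S¹, the positions v : Fin n → S¹ are injective, and voter i has a closed approval set A(i) ⊆ S¹ with v(i) ∈ A(i). Suppose the society is super-agreeable: for every pair of voters i, j there is a connected subset C of S¹ with v(i) ∈ C, v(j) ∈ C, and C ⊆ A(i) ∪ A(j). Then there is an option approved by a strict majority of the voters: there exists x ∈ S¹ with 2 · |{i : x ∈ A(i)}| > n, the cardinality taken as a Finset card over Fin n. -/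
open Classical

open Set in
lemma linear_common_point {ι : Type*} [Fintype ι] [Nonempty ι] (v : ι → ℝ) (A : ι → Set ℝ)
    (hc : ∀ i, IsClosed (A i)) (hm : ∀ i, v i ∈ A i)
    (hp : ∀ i j, Set.uIcc (v i) (v j) ⊆ A i ∪ A j) : ∃ y, ∀ i, y ∈ A i := by
  classical
  obtain ⟨M, hM⟩ : ∃ M, ∀ i, v i ≤ M := ⟨Finset.univ.sup' Finset.univ_nonempty v,
    fun i => Finset.le_sup' v (Finset.mem_univ i)⟩
  set S : ι → Set ℝ := fun i => {t | t ∈ Icc (v i) M ∧ Icc (v i) t ⊆ A i} with hS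
  have hSne : ∀ i, (v i) ∈ S i := fun i =>
    ⟨⟨le_rfl, hM i⟩, by simp [hm i]⟩
  have hSbdd : ∀ i, BddAbove (S i) := fun i => ⟨M, fun t ht => ht.1.2⟩
  set s : ι → ℝ := fun i => sSup (S i) with hs
  have hle : ∀ i, v i ≤ s i := fun i => le_csSup (hSbdd i) (hSne i)
  have hsM : ∀ i, s i ≤ M := fun i => csSup_le ⟨_, hSne i⟩ (fun t ht => ht.1.2)
  have key : ∀ i t, v i ≤ t → t ≤ s i → t ∈ A i := by
    intro i t h1 h2
    rcases eq_or_lt_of_le h2 with h2 | h2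
    · rcases eq_or_lt_of_le h1 with h1 | h1
      · rw [← h1]; exact hm i
      · have hsub : Ico (v i) t ⊆ A i := by
          intro u hu
          obtain ⟨w, hw, huw⟩ := exists_lt_of_lt_csSup ⟨_, hSne i⟩ (h2 ▸ hu.2)
          exact hw.2 ⟨hu.1, huw.le⟩
        have : t ∈ closure (Ico (v i) t) := by
          rw [closure_Ico (ne_of_lt h1)]
          exact ⟨h1.le, le_rfl⟩
        exact (hc i).closure_subset ((closure_mono hsub) this)
    · obtain ⟨w, hw, huw⟩ := exists_lt_of_lt_csSup ⟨_, hSne i⟩ h2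
      exact hw.2 ⟨h1, huw.le⟩
  obtain ⟨k, -, hk⟩ := Finset.exists_min_image Finset.univ s
    ⟨Classical.arbitrary ι, Finset.mem_univ _⟩
  refine ⟨s k, fun i => ?_⟩
  rcases le_or_gt (v i) (s k) with h | h
  · exact key i (s k) h (hk i (Finset.mem_univ i))
  · refine (hc i).closure_subset ?_
    rw [Metric.mem_closure_iff]
    intro ε hε
    set t : ℝ := min (v i) (s k + ε/2) with ht
    have htk : s k < t := lt_min h (by linarith)
    have htS : t ∉ S k := fun hmem => absurd (le_csSup (hSbdd k) hmem) (not_le.mpr htk)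
    have htIcc : t ∈ Icc (v k) M := ⟨le_trans (hle k) (le_trans (hk k (Finset.mem_univ k)) htk.le),
      le_trans (min_le_left _ _) (hM i)⟩
    have : ¬ (Icc (v k) t ⊆ A k) := fun hsub => htS ⟨htIcc, hsub⟩
    obtain ⟨u, hu, huA⟩ := not_subset.mp this
    have hvk : v k ≤ s k := le_trans (hle k) (hk k (Finset.mem_univ k))
    have huAi : u ∈ A i := by
      have : u ∈ Set.uIcc (v k) (v i) := by
        rw [Set.uIcc_of_le (le_trans hvk h.le)]
        exact ⟨hu.1, le_trans hu.2 (min_le_left _ _)⟩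
      rcases hp k i this with h' | h'
      · exact absurd h' huA
      · exact h'
    have hugt : s k < u := by
      by_contra hle'
      exact huA (key k u hu.1 (not_lt.mp hle'))
    refine ⟨u, huAi, ?_⟩
    rw [Real.dist_eq, abs_of_nonpos (by linarith)]
    have h1 : u ≤ t := hu.2
    have h2 : t ≤ s k + ε/2 := min_le_right _ _
    linarith

open Set in
lemma circle_transfer (x₀ : ℝ) (C : Set (AddCircle (1:ℝ))) (hC : IsConnected C)
    (hx : (x₀ : AddCircle (1:ℝ)) ∉ C) {a b : AddCircle (1:ℝ)} (ha : a ∈ C) (hb : b ∈ C) :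
    ∀ t ∈ Set.uIcc ((AddCircle.equivIoc 1 x₀ a : ℝ)) ((AddCircle.equivIoc 1 x₀ b : ℝ)),
      (t : AddCircle (1:ℝ)) ∈ C := by
  haveI : Fact ((0:ℝ) < 1) := ⟨one_pos⟩
  set φ : AddCircle (1:ℝ) → ℝ := fun z => (AddCircle.equivIoc 1 x₀ z : ℝ) with hφ
  have hsec : ∀ z : AddCircle (1:ℝ), ((φ z : ℝ) : AddCircle (1:ℝ)) = z := by
    intro z
    exact (AddCircle.equivIoc 1 x₀).symm_apply_apply z
  have hcont : ContinuousOn φ C := by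
    intro z hz
    have hzx : z ≠ (x₀ : AddCircle (1:ℝ)) := fun h => hx (h ▸ hz)
    exact (continuous_subtype_val.continuousAt.comp
      (AddCircle.continuousAt_equivIoc 1 x₀ hzx)).continuousWithinAt
  have himg : IsPreconnected (φ '' C) := hC.isPreconnected.image φ hcont
  have hsub : Set.uIcc (φ a) (φ b) ⊆ φ '' C :=
    himg.ordConnected.uIcc_subset (mem_image_of_mem φ ha) (mem_image_of_mem φ hb)
  intro t ht
  obtain ⟨c, hc, rfl⟩ := hsub ht
  rw [hsec]
  exact hc

/-- **Approval voting on a circular spectrum.** In a super-agreeable society of `n ≥ 1`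
voters on the circular political spectrum `S¹ = ℝ/ℤ` — voter `i` has position `v i` and
a closed approval set `A i` containing `v i`, and for every pair `i, j` some connected
subset of the circle containing both positions is covered by `A i ∪ A j` — there is an
option approved by a strict majority of the voters. -/
theorem circular_society_majority
    (n : ℕ) (hn : 1 ≤ n)
    (v : Fin n → AddCircle (1 : ℝ)) (hv : Function.Injective v)
    (A : Fin n → Set (AddCircle (1 : ℝ)))
    (hclosed : ∀ i, IsClosed (A i))
    (hmem : ∀ i, v i ∈ A i)
    (hagree : ∀ i j, ∃ C : Set (AddCircle (1 : ℝ)),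
      IsConnected C ∧ v i ∈ C ∧ v j ∈ C ∧ C ⊆ A i ∪ A j) :
    ∃ x : AddCircle (1 : ℝ),
      2 * (Finset.univ.filter (fun i : Fin n => x ∈ A i)).card > n := by
  classical
  haveI : Fact ((0:ℝ) < 1) := ⟨one_pos⟩
  by_contra hcon
  push_neg at hcon
  set f : AddCircle (1:ℝ) → ℕ :=
    fun x => (Finset.univ.filter (fun i : Fin n => x ∈ A i)).card with hf
  have hcoe : Continuous (fun t : ℝ => (t : AddCircle (1:ℝ))) := AddCircle.continuous_mk' 1
  -- Step A: for every x, 2 * f x = n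
  have heq : ∀ x : AddCircle (1:ℝ), 2 * f x = n := by
    intro x
    refine le_antisymm (hcon x) ?_
    -- the voters not approving x
    set Sx : Finset (Fin n) := Finset.univ.filter (fun i => x ∉ A i) with hSx
    have hcards : f x + Sx.card = n := by
      have := Finset.card_filter_add_card_filter_not
        (s := (Finset.univ : Finset (Fin n))) (p := fun i => x ∈ A i)
      simpa using this
    by_cases hne : Sx.Nonempty
    · -- build the linear society on the complement of x
      obtain ⟨x₀, hx₀⟩ := QuotientAddGroup.mk_surjective x
      haveI : Nonempty {i : Fin n // x ∉ A i} := by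
        obtain ⟨i, hi⟩ := hne
        rw [hSx, Finset.mem_filter] at hi
        exact ⟨⟨i, hi.2⟩⟩
      set v' : {i : Fin n // x ∉ A i} → ℝ :=
        fun i => (AddCircle.equivIoc 1 x₀ (v i.1) : ℝ) with hv'
      set A' : {i : Fin n // x ∉ A i} → Set ℝ :=
        fun i => (fun t : ℝ => (t : AddCircle (1:ℝ))) ⁻¹' (A i.1) with hA'
      have hsec : ∀ z : AddCircle (1:ℝ),
          (((AddCircle.equivIoc 1 x₀ z : ℝ)) : AddCircle (1:ℝ)) = z :=
        fun z => (AddCircle.equivIoc 1 x₀).symm_apply_apply z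
      have hc' : ∀ i, IsClosed (A' i) := fun i => (hclosed i.1).preimage hcoe
      have hm' : ∀ i, v' i ∈ A' i := by
        intro i
        show (((AddCircle.equivIoc 1 x₀ (v i.1) : ℝ)) : AddCircle (1:ℝ)) ∈ A i.1
        rw [hsec]
        exact hmem i.1
      have hp' : ∀ i j, Set.uIcc (v' i) (v' j) ⊆ A' i ∪ A' j := by
        intro i j t ht
        obtain ⟨C, hC, hvi, hvj, hCsub⟩ := hagree i.1 j.1
        have hxC : (x₀ : AddCircle (1:ℝ)) ∉ C := by
          rw [hx₀]
          intro hxc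
          rcases hCsub hxc with h | h
          · exact i.2 h
          · exact j.2 h
        have := circle_transfer x₀ C hC hxC hvi hvj t ht
        rcases hCsub this with h | h
        · exact Or.inl h
        · exact Or.inr h
      obtain ⟨y, hy⟩ := linear_common_point v' A' hc' hm' hp'
      have hsubset : Sx ⊆ Finset.univ.filter
          (fun i => ((y : AddCircle (1:ℝ))) ∈ A i) := by
        intro i hi
        rw [hSx, Finset.mem_filter] at hi
        rw [Finset.mem_filter]
        exact ⟨Finset.mem_univ i, hy ⟨i, hi.2⟩⟩
      have hcard : Sx.card ≤ f ((y : AddCircle (1:ℝ))) := Finset.card_le_card hsubset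
      have hcony : 2 * f ((y : AddCircle (1:ℝ))) ≤ n := hcon _
      omega
    · -- Sx empty: f x = n
      rw [Finset.not_nonempty_iff_eq_empty] at hne
      rw [hne] at hcards
      simp at hcards
      have := hcon x
      omega
  -- f is everywhere positive
  have hfpos : 1 ≤ f (v ⟨0, hn⟩) := by
    have : (⟨0, hn⟩ : Fin n) ∈ Finset.univ.filter
        (fun i : Fin n => v ⟨0, hn⟩ ∈ A i) :=
      Finset.mem_filter.mpr ⟨Finset.mem_univ _, hmem _⟩
    exact Finset.card_pos.mpr ⟨_, this⟩
  -- some approval set is not open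
  by_cases hopen : ∀ i, IsOpen (A i)
  · -- all clopen, hence all = univ, hence f x = n everywhere, contradiction
    have huniv : ∀ i, A i = Set.univ := by
      intro i
      exact IsClopen.eq_univ ⟨hclosed i, hopen i⟩ ⟨v i, hmem i⟩
    have : f (v ⟨0, hn⟩) = n := by
      rw [hf]
      simp [huniv]
    have := heq (v ⟨0, hn⟩)
    omega
  · push_neg at hopen
    obtain ⟨i, hi⟩ := hopen
    -- find a point of A i in the closure of its complement
    have hnsub : ¬ (closure ((A i)ᶜ) ⊆ (A i)ᶜ) := by
      intro h
      exact hi (isClosed_compl_iff.mp (isClosed_of_closure_subset h))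
    obtain ⟨x, hxcl, hxA⟩ := Set.not_subset.mp hnsub
    rw [Set.notMem_compl_iff] at hxA
    -- decompose the complement by approval pattern
    set E : Finset (Fin n) → Set (AddCircle (1:ℝ)) :=
      fun T => {u | u ∉ A i ∧ Finset.univ.filter (fun j => u ∈ A j) = T} with hE
    have hcover : (A i)ᶜ ⊆ ⋃ T : Finset (Fin n), closure (E T) := by
      intro u hu
      exact Set.mem_iUnion.mpr ⟨Finset.univ.filter (fun j => u ∈ A j),
        subset_closure ⟨hu, rfl⟩⟩
    have hclU : IsClosed (⋃ T : Finset (Fin n), closure (E T)) :=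
      isClosed_iUnion_of_finite (fun T => isClosed_closure)
    have hxU : x ∈ ⋃ T : Finset (Fin n), closure (E T) :=
      (closure_minimal hcover hclU) hxcl
    obtain ⟨T, hxT⟩ := Set.mem_iUnion.mp hxU
    have hTne : (E T).Nonempty := by
      by_contra hemp
      rw [Set.not_nonempty_iff_eq_empty] at hemp
      rw [hemp, closure_empty] at hxT
      exact hxT
    obtain ⟨u, huA, huT⟩ := hTne
    have hiT : i ∉ T := by
      intro hiT
      rw [← huT, Finset.mem_filter] at hiT
      exact huA hiT.2
    have hTcard : 2 * T.card = n := by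
      have h := heq u
      have h2 : f u = T.card := by
        show (Finset.univ.filter (fun j => u ∈ A j)).card = T.card
        rw [huT]
      omega
    have hxAj : ∀ j ∈ T, x ∈ A j := by
      intro j hj
      have hsubj : E T ⊆ A j := by
        intro w hw
        have : j ∈ Finset.univ.filter (fun j' => w ∈ A j') := hw.2 ▸ hj
        exact (Finset.mem_filter.mp this).2
      exact (hclosed j).closure_subset ((closure_mono hsubj) hxT)
    have hins : insert i T ⊆ Finset.univ.filter (fun j => x ∈ A j) := by
      intro j hj
      rw [Finset.mem_insert] at hj
      rcases hj with rfl | hj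
      · exact Finset.mem_filter.mpr ⟨Finset.mem_univ _, hxA⟩
      · exact Finset.mem_filter.mpr ⟨Finset.mem_univ _, hxAj j hj⟩
    have hcard2 : T.card + 1 ≤ f x := by
      have h1 := Finset.card_le_card hins
      rw [Finset.card_insert_of_notMem hiT] at h1
      exact h1
    have := heq x
    omega
end

section
/- Let S ⊆ ℝ be a nonempty, bounded, connected set (an interval, not necessarily closed), and let f : ℝ → ℝ be continuous on S with f(S) ⊆ S. Suppose f is a compact map in the sense that there exists a compact set K with f(S) ⊆ K ⊆ S. Then f has a fixed point in S: there exists x ∈ S with f(x) = x. -/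
/-- **Fixed point theorem for compact self-maps of a bounded interval.** Let `S ⊆ ℝ` be
a nonempty bounded connected set (an interval, not necessarily closed), and let
`f : ℝ → ℝ` be continuous on `S` with `f(S) ⊆ S`. If `f` is a compact map on `S`, i.e.
there is a compact set `K` with `f(S) ⊆ K ⊆ S`, then `f` has a fixed point in `S`. -/
theorem bounded_interval_compact_fixed_point
    (S : Set ℝ) (hne : S.Nonempty) (hbdd : Bornology.IsBounded S)
    (hconn : IsPreconnected S)
    (f : ℝ → ℝ) (hf : ContinuousOn f S) (hmaps : Set.MapsTo f S S)
    (hcompact : ∃ K : Set ℝ, IsCompact K ∧ f '' S ⊆ K ∧ K ⊆ S) :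
    ∃ x ∈ S, f x = x := by
  obtain ⟨K, hK, hfK, hKS⟩ := hcompact
  obtain ⟨x₀, hx₀⟩ := hne
  have hKne : K.Nonempty := ⟨f x₀, hfK ⟨x₀, hx₀, rfl⟩⟩
  obtain ⟨M, hMK, hMmax⟩ := hK.exists_isGreatest hKne
  obtain ⟨m, hmK, hmmin⟩ := hK.exists_isLeast hKne
  have hMS : M ∈ S := hKS hMK
  have hmS : m ∈ S := hKS hmK
  have h1 : f M ≤ M := hMmax (hfK ⟨M, hMS, rfl⟩)
  have h2 : m ≤ f m := hmmin (hfK ⟨m, hmS, rfl⟩)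
  exact hconn.intermediate_value₂ hMS hmS hf continuousOn_id h1 h2
end

section
/- Let f : ℝ → ℝ be continuous, and for each a ∈ ℝ define the move-away set D(a) = {x ∈ ℝ : |x − a| ≤ |f(x) − a|}. Then the family {D(a) : a ∈ ℝ} is a KKM cover of the line: (i) each D(a) is closed; (ii) a ∈ D(a) for every a; and (iii) for all a, b ∈ ℝ, the closed interval between a and b (Set.uIcc a b) is contained in D(a) ∪ D(b). -/
/-- **The move-away sets of a continuous self-map of the line form a KKM cover.** For a
continuous `f : ℝ → ℝ` and `a : ℝ`, let `D a = {x : |x - a| ≤ |f x - a|}` be the set of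
points that do not move strictly closer to `a` under `f`. Then each `D a` is closed,
contains `a`, and for all `a, b` the segment between `a` and `b` is covered by
`D a ∪ D b`. -/
theorem move_away_kkm_cover
    (f : ℝ → ℝ) (hf : Continuous f) :
    (∀ a : ℝ, IsClosed {x : ℝ | |x - a| ≤ |f x - a|}) ∧
    (∀ a : ℝ, a ∈ {x : ℝ | |x - a| ≤ |f x - a|}) ∧
    (∀ a b : ℝ, Set.uIcc a b ⊆
      {x : ℝ | |x - a| ≤ |f x - a|} ∪ {x : ℝ | |x - b| ≤ |f x - b|}) := by
  refine ⟨fun a => ?_, fun a => by simp, fun a b x hx => ?_⟩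
  · exact isClosed_le (by continuity) (by continuity)
  · by_contra h
    simp only [Set.mem_union, Set.mem_setOf_eq, not_or, not_le] at h
    obtain ⟨h1, h2⟩ := h
    have key : |b - a| ≤ |b - f x| + |f x - a| := abs_sub_le _ _ _
    rw [Set.mem_uIcc] at hx
    have habs : |x - a| + |x - b| = |b - a| := by
      rcases hx with ⟨ha, hb⟩ | ⟨hb, ha⟩
      · rw [abs_of_nonneg (by linarith : (0:ℝ) ≤ x - a), abs_of_nonpos (by linarith : x - b ≤ 0),
          abs_of_nonneg (by linarith : (0:ℝ) ≤ b - a)]; ring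
      · rw [abs_of_nonpos (by linarith : x - a ≤ 0), abs_of_nonneg (by linarith : (0:ℝ) ≤ x - b),
          abs_of_nonpos (by linarith : b - a ≤ 0)]; ring
    have := abs_sub_comm b (f x)
    linarith [h1, h2, key, habs, abs_sub_comm b (f x)]
end
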